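/- Let α_n = sqrt(a(n+1)) with a > 0 (Charlier off-diagonal) and define δ₂(m,n) = -det of the 2×2 matrix with rows (α_n - α_m, α_{n-1} - α_{m-1}) and (α_{n-1} - α_{m+1}, α_{n-2} - α_m). Then for each fixed m ≥ 1, δ₂(m,n) does not vanish for all n; consequently the Charlier Jacobi matrix (with β_n = n+a) admits no nonzero commuting Hankel matrix. -/

import Mathlib

/-- Entry of `J * H` where `J` is the tridiagonal matrix with diagonal `β` and
off-diagonal `α` (`J_{k,k+1} = J_{k+1,k} = α k`). -/
noncomputable def jacobiMulR (α β : ℕ → ℝ) (H : ℕ → ℕ → ℝ) (m n : ℕ) : ℝ :=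
  (if m = 0 then 0 else α (m - 1) * H (m - 1) n) + β m * H m n + α m * H (m + 1) n

/-- Entry of `H * J`. -/
noncomputable def mulJacobiR (α β : ℕ → ℝ) (H : ℕ → ℕ → ℝ) (m n : ℕ) : ℝ :=
  (if n = 0 then 0 else H m (n - 1) * α (n - 1)) + H m n * β n + H m (n + 1) * α n

section SqrtFacts

private lemma sqrt2_sq : Real.sqrt 2 ^ 2 = 2 := Real.sq_sqrt (by norm_num)
private lemma sqrt3_sq : Real.sqrt 3 ^ 2 = 3 := Real.sq_sqrt (by norm_num)
private lemma sqrt5_sq : Real.sqrt 5 ^ 2 = 5 := Real.sq_sqrt (by norm_num)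

private lemma sqrt2_lb : (1.414213:ℝ) < Real.sqrt 2 := by
  nlinarith [sqrt2_sq, Real.sqrt_nonneg 2]
private lemma sqrt2_ub : Real.sqrt 2 < 1.414214 := by
  nlinarith [sqrt2_sq, Real.sqrt_nonneg 2]
private lemma sqrt3_lb : (1.732050:ℝ) < Real.sqrt 3 := by
  nlinarith [sqrt3_sq, Real.sqrt_nonneg 3]
private lemma sqrt3_ub : Real.sqrt 3 < 1.732051 := by
  nlinarith [sqrt3_sq, Real.sqrt_nonneg 3]
private lemma sqrt5_lb : (2.236067:ℝ) < Real.sqrt 5 := by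
  nlinarith [sqrt5_sq, Real.sqrt_nonneg 5]
private lemma sqrt5_ub : Real.sqrt 5 < 2.236068 := by
  nlinarith [sqrt5_sq, Real.sqrt_nonneg 5]

private lemma sqrt6_eq : Real.sqrt 6 = Real.sqrt 2 * Real.sqrt 3 := by
  rw [show (6:ℝ) = 2*3 by norm_num, Real.sqrt_mul (by norm_num)]
private lemma sqrt4_eq : Real.sqrt 4 = 2 := by
  rw [show (4:ℝ) = 2^2 by norm_num, Real.sqrt_sq (by norm_num)]

/-- the key 3×3 determinant is positive -/
private lemma det_pos : 0 < 5*((1-Real.sqrt 4)*(Real.sqrt 3-Real.sqrt 4)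
      - (Real.sqrt 2-Real.sqrt 5)*(Real.sqrt 2-Real.sqrt 3))
    - 3*((-Real.sqrt 5)*(Real.sqrt 3-Real.sqrt 4)
      - (1-Real.sqrt 6)*(Real.sqrt 2-Real.sqrt 3))
    + ((-Real.sqrt 5)*(Real.sqrt 2-Real.sqrt 5) - (1-Real.sqrt 6)*(1-Real.sqrt 4)) := by
  rw [sqrt6_eq, sqrt4_eq]
  nlinarith [sqrt2_sq, sqrt3_sq, sqrt5_sq, sqrt2_lb, sqrt2_ub, sqrt3_lb, sqrt3_ub,
    sqrt5_lb, sqrt5_ub]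

end SqrtFacts

set_option maxHeartbeats 4000000 in
/-- for the Charlier off-diagonal `α_n = sqrt(a(n+1))`, `a > 0`, and
`δ₂(m,n) = -det [[α_n - α_m, α_{n-1} - α_{m-1}], [α_{n-1} - α_{m+1}, α_{n-2} - α_m]]`,
for every fixed `m ≥ 1` the quantity `δ₂(m,n)` does not vanish for all `n`; consequently
the Charlier Jacobi matrix (with `β_n = n + a`) admits no nonzero commuting Hankel
matrix. -/
theorem stmt14 (a : ℝ) (ha : 0 < a) :
    (∀ m : ℕ, 1 ≤ m → ∃ n : ℕ, 2 ≤ n ∧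
      -( (Real.sqrt (a * (n + 1)) - Real.sqrt (a * (m + 1)))
            * (Real.sqrt (a * ((n : ℝ) - 2 + 1)) - Real.sqrt (a * (m + 1)))
         - (Real.sqrt (a * ((n : ℝ) - 1 + 1)) - Real.sqrt (a * ((m : ℝ) - 1 + 1)))
            * (Real.sqrt (a * ((n : ℝ) - 1 + 1)) - Real.sqrt (a * ((m : ℝ) + 1 + 1))) )
        ≠ 0) ∧
    (∀ h : ℕ → ℝ,
      (∀ m n : ℕ,
        jacobiMulR (fun k => Real.sqrt (a * ((k : ℝ) + 1))) (fun k => (k : ℝ) + a)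
          (fun i j => h (i + j)) m n =
        mulJacobiR (fun k => Real.sqrt (a * ((k : ℝ) + 1))) (fun k => (k : ℝ) + a)
          (fun i j => h (i + j)) m n) →
      ∀ k : ℕ, h k = 0) := by
  have ha' := ha.le
  have hra : (0:ℝ) < Real.sqrt a := Real.sqrt_pos.2 ha
  constructor
  · -- Part 1
    intro m hm
    rcases eq_or_ne m 1 with rfl | hm1
    · -- m = 1 : take n = 4
      refine ⟨4, by norm_num, ?_⟩
      push_cast
      norm_num
      have hG : 0 < (2 - Real.sqrt 3) - (Real.sqrt 5 - Real.sqrt 2)*(Real.sqrt 3 - Real.sqrt 2) := by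
        nlinarith [sqrt2_sq, sqrt3_sq, sqrt5_sq, sqrt2_lb, sqrt2_ub, sqrt3_lb, sqrt3_ub,
          sqrt5_lb, sqrt5_ub]
      have e : (Real.sqrt a * 2 - Real.sqrt a) * (Real.sqrt a * 2 - Real.sqrt a * Real.sqrt 3)
          - (Real.sqrt a * Real.sqrt 5 - Real.sqrt a * Real.sqrt 2)
            * (Real.sqrt a * Real.sqrt 3 - Real.sqrt a * Real.sqrt 2)
          = (Real.sqrt a * Real.sqrt a)
            * ((2 - Real.sqrt 3) - (Real.sqrt 5 - Real.sqrt 2)*(Real.sqrt 3 - Real.sqrt 2)) := by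
        ring
      rw [e]
      exact ne_of_gt (mul_pos (mul_pos hra hra) hG)
    rcases eq_or_ne m 2 with rfl | hm2
    · -- m = 2 : take n = 5
      refine ⟨5, by norm_num, ?_⟩
      push_cast
      norm_num
      have hG : 0 < (Real.sqrt 5 - Real.sqrt 2)*(Real.sqrt 5 - 2)
          - (Real.sqrt 2 * Real.sqrt 3 - Real.sqrt 3)*(2 - Real.sqrt 3) := by
        nlinarith [sqrt2_sq, sqrt3_sq, sqrt5_sq, sqrt2_lb, sqrt2_ub, sqrt3_lb, sqrt3_ub,
          sqrt5_lb, sqrt5_ub]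
      rw [sqrt6_eq]
      have e : (Real.sqrt a * Real.sqrt 5 - Real.sqrt a * Real.sqrt 2)
            * (Real.sqrt a * Real.sqrt 5 - Real.sqrt a * 2)
          - (Real.sqrt a * (Real.sqrt 2 * Real.sqrt 3) - Real.sqrt a * Real.sqrt 3)
            * (Real.sqrt a * 2 - Real.sqrt a * Real.sqrt 3)
          = (Real.sqrt a * Real.sqrt a) * ((Real.sqrt 5 - Real.sqrt 2)*(Real.sqrt 5 - 2)
            - (Real.sqrt 2 * Real.sqrt 3 - Real.sqrt 3)*(2 - Real.sqrt 3)) := by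
        ring
      rw [e]
      exact ne_of_gt (mul_pos (mul_pos hra hra) hG)
    · -- m ≥ 3 : take n = 2
      have hm3 : 3 ≤ m := by omega
      refine ⟨2, le_refl 2, ?_⟩
      have hM3 : (3:ℝ) ≤ (m:ℝ) := by exact_mod_cast hm3
      have hMnn : (0:ℝ) ≤ (m:ℝ) := by linarith
      push_cast
      norm_num
      rw [Real.sqrt_mul ha' ((m:ℝ)+1), Real.sqrt_mul ha' ((m:ℝ)+1+1)]
      set x := Real.sqrt (m:ℝ) with hxdef
      set y := Real.sqrt ((m:ℝ)+1) with hydef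
      set z := Real.sqrt ((m:ℝ)+1+1) with hzdef
      have hx2 : x^2 = (m:ℝ) := Real.sq_sqrt hMnn
      have hy2 : y^2 = (m:ℝ)+1 := Real.sq_sqrt (by linarith)
      have hz2 : z^2 = (m:ℝ)+1+1 := Real.sq_sqrt (by linarith)
      have hxnn : 0 ≤ x := Real.sqrt_nonneg _
      have hynn : 0 ≤ y := Real.sqrt_nonneg _
      have hznn : 0 ≤ z := Real.sqrt_nonneg _
      have hs2x : Real.sqrt 2 < x := Real.sqrt_lt_sqrt (by norm_num) (by linarith)
      have hs2z : Real.sqrt 2 < z := Real.sqrt_lt_sqrt (by norm_num) (by linarith)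
      have hs3y : Real.sqrt 3 < y := Real.sqrt_lt_sqrt (by norm_num) (by linarith)
      have h1y : 1 < y := by
        have := Real.sqrt_lt_sqrt (le_refl (0:ℝ) |>.trans (by norm_num : (0:ℝ) ≤ 1))
          (show (1:ℝ) < (m:ℝ)+1 by linarith)
        rwa [Real.sqrt_one] at this
      have hxz2 : (x*z)^2 = (m:ℝ)*((m:ℝ)+1+1) := by rw [mul_pow, hx2, hz2]
      have hxzeq : x*z = Real.sqrt ((m:ℝ)*((m:ℝ)+1+1)) := (Real.sqrt_mul hMnn _).symm
      have hxzlb : (m:ℝ)+1-1/7 ≤ x*z := by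
        rw [hxzeq]
        rw [Real.le_sqrt (by linarith) (by nlinarith)]
        nlinarith
      have hsum1 : (0:ℝ) ≤ Real.sqrt 3*((m:ℝ)+1) + 2*(x*z) := by positivity
      have h2xz : Real.sqrt 3*((m:ℝ)+1) ≤ 2*(x*z) := by
        nlinarith [hxz2, sqrt3_sq, hM3, hsum1, Real.sqrt_nonneg 3, mul_nonneg hxnn hznn]
      have hL2 : (Real.sqrt 2*(x+z))^2 = 2*((m:ℝ) + ((m:ℝ)+1+1)) + 4*(x*z) := by
        linear_combination ((x+z)^2)*sqrt2_sq + 2*hx2 + 2*hz2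
      have hR2 : ((1+Real.sqrt 3)*y)^2 = (4+2*Real.sqrt 3)*((m:ℝ)+1) := by
        linear_combination (y^2)*sqrt3_sq + (4+2*Real.sqrt 3)*hy2
      have hcxz : (1+Real.sqrt 3)*y ≤ Real.sqrt 2*(x+z) := by
        have hsq : ((1+Real.sqrt 3)*y)^2 ≤ (Real.sqrt 2*(x+z))^2 := by
          rw [hL2, hR2]; linarith [h2xz]
        have hA : 0 ≤ (1+Real.sqrt 3)*y := by positivity
        have hB : 0 ≤ Real.sqrt 2*(x+z) := by positivity
        calc (1+Real.sqrt 3)*y = Real.sqrt (((1+Real.sqrt 3)*y)^2) := (Real.sqrt_sq hA).symm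
          _ ≤ Real.sqrt ((Real.sqrt 2*(x+z))^2) := Real.sqrt_le_sqrt hsq
          _ = Real.sqrt 2*(x+z) := Real.sqrt_sq hB
      have hUV : (y+1)*(y+Real.sqrt 3) < (x+Real.sqrt 2)*(z+Real.sqrt 2) := by
        have eV : (x+Real.sqrt 2)*(z+Real.sqrt 2)
            = x*z + Real.sqrt 2*x + Real.sqrt 2*z + 2 := by
          linear_combination sqrt2_sq
        have eU : (y+1)*(y+Real.sqrt 3)
            = ((m:ℝ)+1) + y + Real.sqrt 3*y + Real.sqrt 3 := by
          linear_combination hy2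
        rw [eU, eV]
        have hc' : y + Real.sqrt 3*y ≤ Real.sqrt 2*x + Real.sqrt 2*z := by
          nlinarith [hcxz]
        linarith [hxzlb, sqrt3_ub]
      have hprod : ((x-Real.sqrt 2)*(z-Real.sqrt 2))*((x+Real.sqrt 2)*(z+Real.sqrt 2))
          = ((y-1)*(y-Real.sqrt 3))*((y+1)*(y+Real.sqrt 3)) := by
        have e1 : ((x-Real.sqrt 2)*(z-Real.sqrt 2))*((x+Real.sqrt 2)*(z+Real.sqrt 2))
            = (x^2-Real.sqrt 2^2)*(z^2-Real.sqrt 2^2) := by ring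
        have e2 : ((y-1)*(y-Real.sqrt 3))*((y+1)*(y+Real.sqrt 3))
            = (y^2-1^2)*(y^2-Real.sqrt 3^2) := by ring
        rw [e1, e2, sqrt2_sq, sqrt3_sq, hx2, hy2, hz2]; ring
      have hQpos : 0 < (x-Real.sqrt 2)*(z-Real.sqrt 2) :=
        mul_pos (by linarith) (by linarith)
      have hUpos : 0 < (y+1)*(y+Real.sqrt 3) :=
        mul_pos (by linarith) (by nlinarith [Real.sqrt_nonneg 3])
      have hQP : (x-Real.sqrt 2)*(z-Real.sqrt 2) < (y-1)*(y-Real.sqrt 3) := by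
        by_contra hc
        push_neg at hc
        have h1 : ((y-1)*(y-Real.sqrt 3))*((y+1)*(y+Real.sqrt 3))
            ≤ ((x-Real.sqrt 2)*(z-Real.sqrt 2))*((y+1)*(y+Real.sqrt 3)) :=
          mul_le_mul_of_nonneg_right hc hUpos.le
        have h2 : ((x-Real.sqrt 2)*(z-Real.sqrt 2))*((y+1)*(y+Real.sqrt 3))
            < ((x-Real.sqrt 2)*(z-Real.sqrt 2))*((x+Real.sqrt 2)*(z+Real.sqrt 2)) :=
          mul_lt_mul_of_pos_left hUV hQpos
        linarith [hprod]
      have e : (Real.sqrt a * Real.sqrt 2 - Real.sqrt a * x)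
            * (Real.sqrt a * Real.sqrt 2 - Real.sqrt a * z)
          - (Real.sqrt a * Real.sqrt 3 - Real.sqrt a * y) * (Real.sqrt a - Real.sqrt a * y)
          = (Real.sqrt a * Real.sqrt a)
            * ((x-Real.sqrt 2)*(z-Real.sqrt 2) - (y-1)*(y-Real.sqrt 3)) := by
        ring
      rw [e]
      exact ne_of_lt (mul_neg_of_pos_of_neg (mul_pos hra hra) (by linarith))
  · -- Part 2
    intro h Hc
    have A1 := Hc 0 5
    have A2 := Hc 1 4
    have A3 := Hc 2 3
    simp only [jacobiMulR, mulJacobiR] at A1 A2 A3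
    norm_num at A1 A2 A3
    -- solve the 3×3 system at k = 5 : h 4 = h 5 = h 6 = 0
    have hDpos : 0 < Real.sqrt a * Real.sqrt a
        * (5*((1-Real.sqrt 4)*(Real.sqrt 3-Real.sqrt 4)
            - (Real.sqrt 2-Real.sqrt 5)*(Real.sqrt 2-Real.sqrt 3))
          - 3*((-Real.sqrt 5)*(Real.sqrt 3-Real.sqrt 4)
            - (1-Real.sqrt 6)*(Real.sqrt 2-Real.sqrt 3))
          + ((-Real.sqrt 5)*(Real.sqrt 2-Real.sqrt 5)
            - (1-Real.sqrt 6)*(1-Real.sqrt 4))) :=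
      mul_pos (mul_pos hra hra) det_pos
    have k4 : Real.sqrt a * Real.sqrt a
        * (5*((1-Real.sqrt 4)*(Real.sqrt 3-Real.sqrt 4)
            - (Real.sqrt 2-Real.sqrt 5)*(Real.sqrt 2-Real.sqrt 3))
          - 3*((-Real.sqrt 5)*(Real.sqrt 3-Real.sqrt 4)
            - (1-Real.sqrt 6)*(Real.sqrt 2-Real.sqrt 3))
          + ((-Real.sqrt 5)*(Real.sqrt 2-Real.sqrt 5)
            - (1-Real.sqrt 6)*(1-Real.sqrt 4))) * h 4 = 0 := by
      linear_combination
        (Real.sqrt a * (-3*(Real.sqrt 3-Real.sqrt 4) + (Real.sqrt 2-Real.sqrt 5))) * A1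
        + (Real.sqrt a * (5*(Real.sqrt 3-Real.sqrt 4) - (1-Real.sqrt 6))) * A2
        + (Real.sqrt a * (-5*(Real.sqrt 2-Real.sqrt 5) + 3*(1-Real.sqrt 6))) * A3
    have k6 : Real.sqrt a * Real.sqrt a
        * (5*((1-Real.sqrt 4)*(Real.sqrt 3-Real.sqrt 4)
            - (Real.sqrt 2-Real.sqrt 5)*(Real.sqrt 2-Real.sqrt 3))
          - 3*((-Real.sqrt 5)*(Real.sqrt 3-Real.sqrt 4)
            - (1-Real.sqrt 6)*(Real.sqrt 2-Real.sqrt 3))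
          + ((-Real.sqrt 5)*(Real.sqrt 2-Real.sqrt 5)
            - (1-Real.sqrt 6)*(1-Real.sqrt 4))) * h 6 = 0 := by
      linear_combination
        (Real.sqrt a * (-(1-Real.sqrt 4) + 3*(Real.sqrt 2-Real.sqrt 3))) * A1
        + (Real.sqrt a * (-Real.sqrt 5 - 5*(Real.sqrt 2-Real.sqrt 3))) * A2
        + (Real.sqrt a * (3*Real.sqrt 5 + 5*(1-Real.sqrt 4))) * A3
    have h4z : h 4 = 0 := by
      rcases mul_eq_zero.mp k4 with hh | hh
      · exact absurd hh (ne_of_gt hDpos)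
      · exact hh
    have h6z : h 6 = 0 := by
      rcases mul_eq_zero.mp k6 with hh | hh
      · exact absurd hh (ne_of_gt hDpos)
      · exact hh
    have h5z : h 5 = 0 := by
      rw [h4z, h6z] at A3
      linarith
    -- backward steps
    have B1 := Hc 0 1
    have B2 := Hc 0 2
    have B3 := Hc 0 3
    have B4 := Hc 0 4
    simp only [jacobiMulR, mulJacobiR] at B1 B2 B3 B4
    norm_num at B1 B2 B3 B4
    have h3z : h 3 = 0 := by
      rw [h4z, h5z] at B4
      have : h 3 * (Real.sqrt a * 2) = 0 := by linarith
      rcases mul_eq_zero.mp this with hh | hh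
      · exact hh
      · nlinarith [hra]
    have h2z : h 2 = 0 := by
      rw [h3z, h4z] at B3
      have : h 2 * (Real.sqrt a * Real.sqrt 3) = 0 := by linarith
      rcases mul_eq_zero.mp this with hh | hh
      · exact hh
      · exact absurd hh (ne_of_gt (mul_pos hra (by nlinarith [sqrt3_sq, Real.sqrt_nonneg 3])))
    have h1z : h 1 = 0 := by
      rw [h2z, h3z] at B2
      have : h 1 * (Real.sqrt a * Real.sqrt 2) = 0 := by linarith
      rcases mul_eq_zero.mp this with hh | hh
      · exact hh
      · exact absurd hh (ne_of_gt (mul_pos hra (by nlinarith [sqrt2_sq, Real.sqrt_nonneg 2])))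
    have h0z : h 0 = 0 := by
      rw [h1z, h2z] at B1
      have : h 0 * Real.sqrt a = 0 := by linarith
      rcases mul_eq_zero.mp this with hh | hh
      · exact hh
      · exact absurd hh (ne_of_gt hra)
    -- forward induction
    have fwd : ∀ j : ℕ, h (j + 4) = 0 ∧ h (j + 5) = 0 := by
      intro j
      induction j with
      | zero => exact ⟨h4z, h5z⟩
      | succ j ih =>
        refine ⟨by rw [show j + 1 + 4 = j + 5 from by omega]; exact ih.2, ?_⟩
        have C := Hc 0 (j + 5)
        simp only [jacobiMulR, mulJacobiR] at C
        norm_num at C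
        rw [show 1 + (j + 5) = j + 5 + 1 from by omega] at C
        rw [ih.1, ih.2] at C
        have hlt : Real.sqrt a < Real.sqrt (a * ((j:ℝ) + 5 + 1)) := by
          have : a < a * ((j:ℝ) + 5 + 1) := by
            nlinarith [Nat.cast_nonneg (α := ℝ) j]
          calc Real.sqrt a = Real.sqrt (a * 1) := by rw [mul_one]
            _ < Real.sqrt (a * ((j:ℝ) + 5 + 1)) :=
              Real.sqrt_lt_sqrt (by linarith) (by linarith)
        have hz' : h (j + 5 + 1) * (Real.sqrt (a * ((j:ℝ) + 5 + 1)) - Real.sqrt a) = 0 := by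
          linarith [C]
        rw [show j + 1 + 5 = j + 5 + 1 from by omega]
        rcases mul_eq_zero.mp hz' with hh | hh
        · exact hh
        · linarith [hlt, hh]
    intro k
    rcases lt_or_ge k 4 with hk | hk
    · interval_cases k
      · exact h0z
      · exact h1z
      · exact h2z
      · exact h3z
    · have := (fwd (k - 4)).1
      rwa [show k - 4 + 4 = k from by omega] at this
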